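/- Let 0 < ν ≤ 1, k ∈ ℤ with k < 0, n ∈ ℕ with n ≥ 1, γ = √(k²−ν²), and p = ν/√(ν² + (n+γ)²). Then ν + k·p = ν·(n² + 2nγ)/(A·(A+|k|)) where A = √(ν² + (n+γ)²); moreover, there is a constant c_ν > 0 depending only on ν such that ν + k·p ≥ c_ν · n/(n+|k|). -/

import Mathlib

open Real


lemma stmt9aux (ν : ℝ) (hν : 0 < ν) (hν1 : ν ≤ 1) (k : ℤ) (hk : k < 0) (n : ℕ) (hn : 1 ≤ n) :
    ν + (k : ℝ) *
        (ν / Real.sqrt (ν ^ 2 + ((n : ℝ) + Real.sqrt ((k : ℝ) ^ 2 - ν ^ 2)) ^ 2)) =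
      ν * ((n : ℝ) ^ 2 + 2 * n * Real.sqrt ((k : ℝ) ^ 2 - ν ^ 2)) /
        (Real.sqrt (ν ^ 2 + ((n : ℝ) + Real.sqrt ((k : ℝ) ^ 2 - ν ^ 2)) ^ 2) *
          (Real.sqrt (ν ^ 2 + ((n : ℝ) + Real.sqrt ((k : ℝ) ^ 2 - ν ^ 2)) ^ 2) +
            |(k : ℝ)|)) := by
  have hkR : (k : ℝ) ≤ -1 := by exact_mod_cast (by omega : k ≤ -1)
  have hkn : (k : ℝ) < 0 := by linarith
  set γ := Real.sqrt ((k : ℝ) ^ 2 - ν ^ 2) with hγdef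
  have hγ0 : 0 ≤ γ := Real.sqrt_nonneg _
  have hγsq : γ ^ 2 = (k : ℝ) ^ 2 - ν ^ 2 := Real.sq_sqrt (by nlinarith)
  set A := Real.sqrt (ν ^ 2 + ((n : ℝ) + γ) ^ 2) with hAdef
  have hA0 : 0 < A := Real.sqrt_pos.mpr (by positivity)
  have hA2 : A ^ 2 = ν ^ 2 + ((n : ℝ) + γ) ^ 2 := Real.sq_sqrt (by positivity)
  have habs : |(k : ℝ)| = -(k : ℝ) := abs_of_neg hkn
  rw [habs]
  have hAk : A + -(k:ℝ) > 0 := by linarith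
  field_simp
  have hid : A ^ 2 - (k:ℝ) ^ 2 = (n:ℝ) ^ 2 + 2 * n * γ := by nlinarith
  linear_combination hid


/-- For `k < 0`: the identity `ν + k p = ν(n² + 2nγ)/(A(A+|k|))` with
`A = √(ν² + (n+γ)²)`, and the lower bound `ν + k p ≥ c_ν n/(n+|k|)` with a
constant `c_ν > 0` depending only on `ν`. -/
theorem stmt9 (ν : ℝ) (hν : 0 < ν) (hν1 : ν ≤ 1) :
    (∀ k : ℤ, k < 0 → ∀ n : ℕ, 1 ≤ n →
      ν + (k : ℝ) *
          (ν / Real.sqrt (ν ^ 2 + ((n : ℝ) + Real.sqrt ((k : ℝ) ^ 2 - ν ^ 2)) ^ 2)) =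
        ν * ((n : ℝ) ^ 2 + 2 * n * Real.sqrt ((k : ℝ) ^ 2 - ν ^ 2)) /
          (Real.sqrt (ν ^ 2 + ((n : ℝ) + Real.sqrt ((k : ℝ) ^ 2 - ν ^ 2)) ^ 2) *
            (Real.sqrt (ν ^ 2 + ((n : ℝ) + Real.sqrt ((k : ℝ) ^ 2 - ν ^ 2)) ^ 2) +
              |(k : ℝ)|))) ∧
    ∃ c : ℝ, 0 < c ∧ ∀ k : ℤ, k < 0 → ∀ n : ℕ, 1 ≤ n →
      c * n / ((n : ℝ) + |(k : ℝ)|) ≤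
        ν + (k : ℝ) *
          (ν / Real.sqrt (ν ^ 2 + ((n : ℝ) + Real.sqrt ((k : ℝ) ^ 2 - ν ^ 2)) ^ 2)) := by
  constructor
  · intro k hk n hn
    exact stmt9aux ν hν hν1 k hk n hn
  · refine ⟨ν / 12, by positivity, ?_⟩
    intro k hk n hn
    rw [stmt9aux ν hν hν1 k hk n hn]
    have hkR : (k : ℝ) ≤ -1 := by exact_mod_cast (by omega : k ≤ -1)
    have hkn : (k : ℝ) < 0 := by linarith
    have habs : |(k : ℝ)| = -(k : ℝ) := abs_of_neg hkn
    set K := |(k : ℝ)| with hKdef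
    have hK1 : 1 ≤ K := by rw [habs]; linarith
    set γ := Real.sqrt ((k : ℝ) ^ 2 - ν ^ 2) with hγdef
    have hγ0 : 0 ≤ γ := Real.sqrt_nonneg _
    have hγsq : γ ^ 2 = K ^ 2 - ν ^ 2 := by
      rw [hγdef, habs]
      rw [Real.sq_sqrt (by nlinarith)]
      ring
    set A := Real.sqrt (ν ^ 2 + ((n : ℝ) + γ) ^ 2) with hAdef
    have hA0 : 0 < A := Real.sqrt_pos.mpr (by positivity)
    have hA2 : A ^ 2 = ν ^ 2 + ((n : ℝ) + γ) ^ 2 := Real.sq_sqrt (by positivity)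
    have hn1 : (1:ℝ) ≤ n := by exact_mod_cast hn
    -- γ ≥ K - 1
    have hγK : K - 1 ≤ γ := by nlinarith [sq_nonneg (γ + (K - 1))]
    -- γ ≤ K
    have hγle : γ ≤ K := by nlinarith [sq_nonneg (γ + K)]
    -- n + K ≤ 2(n + 2γ)
    have h1 : (n:ℝ) + K ≤ 2 * ((n:ℝ) + 2 * γ) := by linarith
    -- A ≤ 2(n + K)
    have hA : A ≤ 2 * ((n:ℝ) + K) := by
      nlinarith [sq_nonneg (A - 2 * ((n:ℝ) + K)), hA2]
    have hnK : 0 < (n:ℝ) + K := by linarith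
    have hD : A * (A + K) ≤ 6 * ((n:ℝ) + K) ^ 2 := by nlinarith
    have hD0 : 0 < A * (A + K) := by nlinarith
    rw [div_le_div_iff₀ hnK hD0]
    have e1 : ν / 12 * (n:ℝ) * (A * (A + K)) ≤ ν / 12 * (n:ℝ) * (6 * ((n:ℝ) + K) ^ 2) := by
      apply mul_le_mul_of_nonneg_left hD
      positivity
    have e2 : ν / 2 * (n:ℝ) * (((n:ℝ) + K) * ((n:ℝ) + K)) ≤
        ν / 2 * (n:ℝ) * (((n:ℝ) + K) * (2 * ((n:ℝ) + 2 * γ))) := by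
      apply mul_le_mul_of_nonneg_left
      · exact mul_le_mul_of_nonneg_left h1 (le_of_lt hnK)
      · positivity
    calc ν / 12 * (n:ℝ) * (A * (A + K))
        ≤ ν / 12 * (n:ℝ) * (6 * ((n:ℝ) + K) ^ 2) := e1
      _ = ν / 2 * (n:ℝ) * (((n:ℝ) + K) * ((n:ℝ) + K)) := by ring
      _ ≤ ν / 2 * (n:ℝ) * (((n:ℝ) + K) * (2 * ((n:ℝ) + 2 * γ))) := e2
      _ = ν * ((n:ℝ) ^ 2 + 2 * n * γ) * ((n:ℝ) + K) := by ring
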